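/- Let r ∈ ℕ with r ≥ 2 and p ∈ (0,1). Let N₁ be negative binomial with parameters r+1 and p, and N₂ be negative binomial with parameters r−1 and 1−p, independent, let ĝ = (r/(N₁−1))·(N₂/(r−1)), V = Var[ĝ] = E[ĝ²] − (E[ĝ])², and S = E[N₁] + E[N₂]. Then the efficiency p/((1−p)³ · V · S) satisfies p/((1−p)³ · V · S) > ((r−1)/(r+1−2p))·(1 + p(1−p)/(r−1+p+p²)) > (r−1)/(r+1), where all expectations are the corresponding series weighted by the negative binomial probabilities. -/

import Mathlib

open scoped BigOperators

/-- Expectation of `f(N)` where `N` is negative binomial with parameters `s` and `q`: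
`E[f(N)] = Σ_{n ≥ s} f(n) C(n−1, s−1) q^s (1−q)^{n−s}`, written with `n = s + k`. -/
noncomputable def negbinExp (s : ℕ) (q : ℝ) (f : ℕ → ℝ) : ℝ :=
  ∑' k : ℕ, ((s + k - 1).choose (s - 1) : ℝ) * q ^ s * (1 - q) ^ k * f (s + k)

/-- Expectation of `f(N₁, N₂)` for independent negative binomials with parameters
`(s₁, q₁)` and `(s₂, q₂)`. -/
noncomputable def negbinExp2 (s₁ : ℕ) (q₁ : ℝ) (s₂ : ℕ) (q₂ : ℝ) (f : ℕ → ℕ → ℝ) : ℝ :=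
  ∑' k₁ : ℕ, ∑' k₂ : ℕ,
    ((s₁ + k₁ - 1).choose (s₁ - 1) : ℝ) * q₁ ^ s₁ * (1 - q₁) ^ k₁ *
      (((s₂ + k₂ - 1).choose (s₂ - 1) : ℝ) * q₂ ^ s₂ * (1 - q₂) ^ k₂) *
      f (s₁ + k₁) (s₂ + k₂)

/-- The m-th harmonic number `H_m = Σ_{k=1}^m 1/k`, `H_0 = 0`. -/
noncomputable def H (m : ℕ) : ℝ := ∑ k ∈ Finset.range m, (1 : ℝ) / (k + 1)

/-- The odds estimator `ĝ = (r/(N₁−1))·(N₂/(r−1))`. -/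
noncomputable def ghat (r : ℕ) (n₁ n₂ : ℕ) : ℝ :=
  ((r : ℝ) / ((n₁ : ℝ) - 1)) * ((n₂ : ℝ) / ((r : ℝ) - 1))


open Set

set_option linter.unusedTactic false


lemma nbGF (j : ℕ) {x : ℝ} (h0 : 0 ≤ x) (h1 : x < 1) :
    HasSum (fun k : ℕ => ((k + j).choose j : ℝ) * x ^ k) (1 / (1 - x) ^ (j + 1)) :=
  hasSum_choose_mul_geometric_of_norm_lt_one j (by rwa [Real.norm_eq_abs, abs_of_nonneg h0])

lemma chooseId (j k : ℕ) :
    ((k + (j+1)).choose (j+1) : ℝ) * ((j:ℝ)+1) = ((k + j).choose j : ℝ) * ((k:ℝ) + j + 1) := by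
  have h2 : (k + (j+1)).choose (j+1) * (j+1) = (k+j).choose j * (k + j + 1) := by
    rw [show k + (j+1) = (k+j)+1 by omega]
    exact ((Nat.add_one_mul_choose_eq (k+j) j).symm).trans (mul_comm _ _)
  exact_mod_cast congrArg (Nat.cast : ℕ → ℝ) h2

lemma nbGF1 (j : ℕ) {x : ℝ} (h0 : 0 ≤ x) (h1 : x < 1) :
    HasSum (fun k : ℕ => ((k + j).choose j : ℝ) * x ^ k * ((k:ℝ) + j + 1))
      (((j:ℝ)+1) / (1 - x) ^ (j + 2)) := by
  have h := (nbGF (j+1) h0 h1).mul_left ((j:ℝ)+1)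
  have e : ((j:ℝ)+1) * (1 / (1-x)^(j+1+1)) = ((j:ℝ)+1)/(1-x)^(j+2) := by ring
  rw [e] at h
  exact h.congr_fun fun k => by
    linear_combination (norm := (push_cast; ring1)) (-(x^k)) * chooseId j k

lemma nbGF2 (j : ℕ) {x : ℝ} (h0 : 0 ≤ x) (h1 : x < 1) :
    HasSum (fun k : ℕ => ((k + j).choose j : ℝ) * x ^ k * (((k:ℝ) + j + 1) * ((k:ℝ) + j + 2)))
      (((j:ℝ)+1) * ((j:ℝ)+2) / (1 - x) ^ (j + 3)) := by
  have h := (nbGF (j+2) h0 h1).mul_left (((j:ℝ)+1) * ((j:ℝ)+2))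
  have e : (((j:ℝ)+1) * ((j:ℝ)+2)) * (1 / (1-x)^(j+2+1)) = ((j:ℝ)+1)*((j:ℝ)+2)/(1-x)^(j+3) := by
    ring
  rw [e] at h
  exact h.congr_fun fun k => by
    linear_combination (norm := (push_cast; ring1))
      (-(x^k * ((k:ℝ)+j+2))) * chooseId j k + (-(x^k * ((j:ℝ)+1))) * chooseId (j+1) k


-- FTC upper bound block
lemma J_lt_M (m : ℕ) {q : ℝ} (hq0 : 0 < q) (hq1 : q < 1) :
    ∫ x in (0:ℝ)..q, x^(m+1) / (1-x)^(m+2) <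
      q^(m+2) * (((m:ℝ)+2)^2+((m:ℝ)+2)-(2*((m:ℝ)+2)+1)*q+q^2) /
        (((m:ℝ)+2) * ((1-q)^(m+1) * ((((m:ℝ)+2)-q) * (((m:ℝ)+2)+1-2*q)))) := by
  set R : ℝ := (m:ℝ)+2 with hR
  set g : ℝ → ℝ := fun x => x^(m+1) / (1-x)^(m+2) with hg
  set pos : ℝ → ℝ := fun x => 2*x^(m+3) / (R * (1-x)^(m+1) * (R+1-2*x)^2) with hpos
  set M : ℝ → ℝ := fun x => x^(m+2) * (R^2+R-(2*R+1)*x+x^2) /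
      (R * ((1-x)^(m+1) * ((R-x) * (R+1-2*x)))) with hM
  have hRpos : (0:ℝ) < R := by rw [hR]; positivity
  -- facts on the interval
  have key : ∀ x ∈ uIcc (0:ℝ) q, HasDerivAt M (g x + pos x) x := by
    intro x hx
    rw [uIcc_of_le hq0.le] at hx
    obtain ⟨hx0, hxq⟩ := hx
    have hx1 : x < 1 := lt_of_le_of_lt hxq hq1
    have h1x : (0:ℝ) < 1 - x := by linarith
    have hRx : (0:ℝ) < R - x := by rw [hR]; push_cast; linarith
    have hR2x : (0:ℝ) < R + 1 - 2*x := by rw [hR]; push_cast; linarith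
    -- numerator, denominator derivatives
    have hP : HasDerivAt (fun y : ℝ => R^2+R-(2*R+1)*y+y^2) (-(2*R+1)+2*x) x := by
      have h1 : HasDerivAt (fun y : ℝ => y^2) (2*x) x := by simpa using hasDerivAt_pow 2 x
      have h2 : HasDerivAt (fun y : ℝ => (2*R+1)*y) (2*R+1) x := by
        simpa using (hasDerivAt_id x).const_mul (2*R+1)
      exact (((hasDerivAt_const x (R^2+R)).sub h2).add h1).congr_deriv (by ring)
    have hu : HasDerivAt (fun y : ℝ => y^(m+2) * (R^2+R-(2*R+1)*y+y^2))
        ((m+2)*x^(m+1) * (R^2+R-(2*R+1)*x+x^2) + x^(m+2) * (-(2*R+1)+2*x)) x := by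
      have := (hasDerivAt_pow (m+2) x).mul hP
      simpa [Pi.mul_def] using this
    have h1d : HasDerivAt (fun y : ℝ => 1 - y) (-1) x := by
      simpa using (hasDerivAt_id x).const_sub 1
    have hw : HasDerivAt (fun y : ℝ => (1-y)^(m+1)) (-((m:ℝ)+1)*(1-x)^m) x := by
      have := h1d.pow (m+1)
      simpa [Pi.pow_def] using this.congr_deriv (by push_cast; ring)
    have hrx : HasDerivAt (fun y : ℝ => R - y) (-1) x := by
      simpa using (hasDerivAt_id x).const_sub R
    have hr2x : HasDerivAt (fun y : ℝ => R + 1 - 2*y) (-2) x := by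
      simpa using ((hasDerivAt_id x).const_mul 2).const_sub (R+1)
    have hq2 : HasDerivAt (fun y : ℝ => (R-y)*(R+1-2*y)) ((-1)*(R+1-2*x) + (R-x)*(-2)) x :=
      hrx.mul hr2x
    have hv : HasDerivAt (fun y : ℝ => R * ((1-y)^(m+1) * ((R-y)*(R+1-2*y))))
        (R * ((-((m:ℝ)+1)*(1-x)^m) * ((R-x)*(R+1-2*x)) +
          (1-x)^(m+1) * ((-1)*(R+1-2*x) + (R-x)*(-2)))) x :=
      (hw.mul hq2).const_mul R
    have hvne : R * ((1-x)^(m+1) * ((R-x)*(R+1-2*x))) ≠ 0 := by positivity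
    have hdiv := hu.div hv hvne
    refine hdiv.congr_deriv ?_
    -- algebraic identity
    have e1 : x^(m+1) = x^m * x := pow_succ x m
    have e2 : x^(m+2) = x^m * x^2 := by rw [pow_add]
    have e3 : x^(m+3) = x^m * x^3 := by rw [pow_add]
    have f1 : (1-x)^(m+1) = (1-x)^m * (1-x) := pow_succ (1-x) m
    have f2 : (1-x)^(m+2) = (1-x)^m * (1-x)^2 := by rw [pow_add]
    rw [hg, hpos]
    simp only []
    rw [e1, e2, e3, f1, f2]
    have hxm : (0:ℝ) ≤ x^m := by positivity
    have hwm : (0:ℝ) < (1-x)^m := by positivity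
    field_simp
    ring
  have hcont : ContinuousOn (fun x => g x + pos x) (uIcc (0:ℝ) q) := by
    rw [uIcc_of_le hq0.le]
    have h1 : ∀ x ∈ Icc (0:ℝ) q, (1-x) ≠ 0 := by
      intro x hx; have := hx.2; have := hq1; nlinarith [hx.1]
    apply ContinuousOn.add
    · exact ContinuousOn.div (by fun_prop) (by fun_prop)
        (fun x hx => pow_ne_zero _ (h1 x hx))
    · refine ContinuousOn.div (by fun_prop) (by fun_prop) (fun x hx => ?_)
      have h2 : R + 1 - 2*x ≠ 0 := by
        have := hx.1; have := hx.2; rw [hR]; push_cast; nlinarith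
      have := h1 x hx
      positivity
  have hint : IntervalIntegrable (fun x => g x + pos x) MeasureTheory.volume 0 q :=
    hcont.intervalIntegrable
  have hcontg : ContinuousOn g (uIcc (0:ℝ) q) := by
    rw [uIcc_of_le hq0.le]
    refine ContinuousOn.div (by fun_prop) (by fun_prop) (fun x hx => pow_ne_zero _ ?_)
    have := hx.2; nlinarith [hx.1]
  have hintg : IntervalIntegrable g MeasureTheory.volume 0 q := hcontg.intervalIntegrable
  have hintpos : IntervalIntegrable pos MeasureTheory.volume 0 q := by
    have : pos = (fun x => g x + pos x) - g := by funext x; simp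
    rw [this]; exact hint.sub hintg
  have hFTC : ∫ x in (0:ℝ)..q, (g x + pos x) = M q - M 0 :=
    intervalIntegral.integral_eq_sub_of_hasDerivAt key hint
  have hM0 : M 0 = 0 := by simp [hM]
  have hsplit : ∫ x in (0:ℝ)..q, (g x + pos x) =
      (∫ x in (0:ℝ)..q, g x) + ∫ x in (0:ℝ)..q, pos x :=
    intervalIntegral.integral_add hintg hintpos
  have hpospos : 0 < ∫ x in (0:ℝ)..q, pos x := by
    refine intervalIntegral.intervalIntegral_pos_of_pos_on hintpos (fun x hx => ?_) hq0
    obtain ⟨hx0, hxq⟩ := hx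
    have hx1 : x < 1 := lt_trans hxq hq1
    have : (0:ℝ) < R + 1 - 2*x := by rw [hR]; push_cast; nlinarith
    rw [hpos]
    have : (0:ℝ) < 1 - x := by linarith
    positivity
  have : (∫ x in (0:ℝ)..q, g x) < M q := by
    rw [hsplit, hM0, sub_zero] at hFTC; linarith
  simpa [hg, hM] using this



-- Part 3: tsum ≤ J
lemma tsum_le_J (m : ℕ) {q : ℝ} (hq0 : 0 < q) (hq1 : q < 1) :
    ∑' k : ℕ, ((k + (m+1)).choose (m+1) : ℝ) * q^(m+2+k) / ((m:ℝ)+2+k) ≤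
      ∫ x in (0:ℝ)..q, x^(m+1) / (1-x)^(m+2) := by
  have hterm_nonneg : ∀ k : ℕ, 0 ≤ ((k + (m+1)).choose (m+1) : ℝ) * q^(m+2+k) / ((m:ℝ)+2+k) := by
    intro k; positivity
  have hsumm : Summable (fun k : ℕ => ((k + (m+1)).choose (m+1) : ℝ) * q^(m+2+k) / ((m:ℝ)+2+k)) := by
    refine Summable.of_nonneg_of_le hterm_nonneg (fun k => ?_)
      (((nbGF (m+1) hq0.le hq1).summable).mul_left (q^(m+2)))
    have hm := Nat.cast_nonneg (α:=ℝ) m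
    have hk := Nat.cast_nonneg (α:=ℝ) k
    have h1 : (1:ℝ) ≤ (m:ℝ)+2+k := by linarith
    rw [div_le_iff₀ (by linarith), pow_add]
    have : (0:ℝ) ≤ ((k + (m+1)).choose (m+1) : ℝ) * (q^(m+2) * q^k) := by positivity
    nlinarith [this]
  refine hsumm.tsum_le_of_sum_le (fun s => ?_)
  -- each partial sum equals an integral
  have hint_each : ∀ k : ℕ, ((k + (m+1)).choose (m+1) : ℝ) * q^(m+2+k) / ((m:ℝ)+2+k) =
      ∫ x in (0:ℝ)..q, ((k + (m+1)).choose (m+1) : ℝ) * x^(m+1+k) := by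
    intro k
    rw [intervalIntegral.integral_const_mul, integral_pow]
    rw [zero_pow (by omega)]
    push_cast
    rw [show m+1+k+1 = m+2+k from by omega]
    push_cast
    ring
  have hsum_eq : ∑ k ∈ s, ((k + (m+1)).choose (m+1) : ℝ) * q^(m+2+k) / ((m:ℝ)+2+k) =
      ∫ x in (0:ℝ)..q, (∑ k ∈ s, ((k + (m+1)).choose (m+1) : ℝ) * x^(m+1+k)) := by
    rw [intervalIntegral.integral_finset_sum]
    · exact Finset.sum_congr rfl (fun k _ => hint_each k)
    · intro k _
      exact (Continuous.intervalIntegrable (by continuity) 0 q)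
  rw [hsum_eq]
  have hcontg : ContinuousOn (fun x : ℝ => x^(m+1) / (1-x)^(m+2)) (uIcc (0:ℝ) q) := by
    rw [uIcc_of_le hq0.le]
    refine ContinuousOn.div (by fun_prop) (by fun_prop) (fun x hx => pow_ne_zero _ ?_)
    have := hx.2; nlinarith [hx.1]
  refine intervalIntegral.integral_mono_on hq0.le
    (Continuous.intervalIntegrable (by continuity) 0 q) hcontg.intervalIntegrable
    (fun x hx => ?_)
  obtain ⟨hx0, hxq⟩ := hx
  have hx1 : x < 1 := lt_of_le_of_lt hxq hq1
  have h1x : (0:ℝ) < 1 - x := by linarith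
  calc ∑ k ∈ s, ((k + (m+1)).choose (m+1) : ℝ) * x^(m+1+k)
      = x^(m+1) * ∑ k ∈ s, ((k + (m+1)).choose (m+1) : ℝ) * x^k := by
        rw [Finset.mul_sum]
        exact Finset.sum_congr rfl (fun k _ => by rw [pow_add]; ring)
    _ ≤ x^(m+1) * (1 / (1-x)^(m+2)) := by
        refine mul_le_mul_of_nonneg_left ?_ (by positivity)
        have := Summable.sum_le_tsum s (fun k _ => by positivity) (nbGF (m+1) hx0 hx1).summable
        rwa [(nbGF (m+1) hx0 hx1).tsum_eq] at this
    _ = x^(m+1) / (1-x)^(m+2) := by ring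



section
variable (m : ℕ) {p : ℝ}

-- pmf of N₁ ~ NB(m+3, p), k-th term
noncomputable def aa (p : ℝ) (k : ℕ) : ℝ := ((k + (m+2)).choose (m+2) : ℝ) * p^(m+3) * (1-p)^k

lemma haa0 (hp0 : 0 < p) (hp1 : p < 1) : HasSum (aa m p) 1 := by
  have h := (nbGF (m+2) (by linarith : (0:ℝ) ≤ 1-p) (by linarith)).mul_left (p^(m+3))
  have e : 1 - (1-p) = p := by ring
  rw [e] at h
  have e2 : p^(m+3) * (1 / p^(m+2+1)) = 1 := by
    rw [show m+2+1 = m+3 from rfl]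
    field_simp
  rw [e2] at h
  exact h.congr_fun fun k => by simp [aa]; ring

lemma haaX (hp0 : 0 < p) (hp1 : p < 1) :
    HasSum (fun k => aa m p k * (((m:ℝ)+2)/((m:ℝ)+2+k))) p := by
  have h := (nbGF (m+1) (by linarith : (0:ℝ) ≤ 1-p) (by linarith)).mul_left (p^(m+3))
  have e : 1 - (1-p) = p := by ring
  rw [e] at h
  have e2 : p^(m+3) * (1 / p^(m+1+1)) = p := by
    rw [show m+1+1 = m+2 from rfl]
    field_simp
    ring
  rw [e2] at h
  refine h.congr_fun fun k => ?_
  have hn : ((m:ℝ)+2+k) ≠ 0 := by positivity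
  have hc := chooseId (m+1) k
  push_cast at hc
  simp only [aa]
  field_simp
  push_cast
  linear_combination ((1-p)^k) * hc

lemma haaN1 (hp0 : 0 < p) (hp1 : p < 1) :
    HasSum (fun k => aa m p k * ((m:ℝ)+2+k)) (((m:ℝ)+3)/p - 1) := by
  have h := (nbGF1 (m+2) (by linarith : (0:ℝ) ≤ 1-p) (by linarith)).mul_left (p^(m+3))
  have e : 1 - (1-p) = p := by ring
  rw [e] at h
  -- h : HasSum (fun k => p^(m+3) * (C * (1-p)^k * (k+(m+2)+1))) (p^(m+3)*((m+2+1)/p^(m+2+2)))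
  have h0 := haa0 m hp0 hp1
  have h2 := h.sub h0
  have e2 : p ^ (m + 3) * ((↑(m+2) + 1) / p ^ (m + 2 + 2)) - 1 = ((m:ℝ)+3)/p - 1 := by
    push_cast
    rw [show m+2+2 = (m+3)+1 from by omega, pow_succ]
    field_simp
    ring
  rw [e2] at h2
  refine h2.congr_fun fun k => ?_
  simp only [aa]
  push_cast
  ring

lemma haaN2 (hp0 : 0 < p) (hp1 : p < 1) :
    HasSum (fun k => aa m p k * ((m:ℝ)+2+k)^2)
      (((m:ℝ)+3)*((m:ℝ)+4)/p^2 - 3*(((m:ℝ)+3)/p) + 1) := by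
  have hq0 : (0:ℝ) ≤ 1-p := by linarith
  have hq1 : 1-p < 1 := by linarith
  have h := (nbGF2 (m+2) hq0 hq1).mul_left (p^(m+3))
  have e : 1 - (1-p) = p := by ring
  rw [e] at h
  have h1 := (nbGF1 (m+2) hq0 hq1).mul_left (p^(m+3))
  rw [e] at h1
  have h0 := haa0 m hp0 hp1
  have hc := (h.sub (h1.const_smul (3:ℝ))).add h0
  have e2 : p ^ (m+3) * ((↑(m+2)+1) * (↑(m+2)+2) / p ^ (m+2+3)) -
      (3:ℝ) • (p ^ (m+3) * ((↑(m+2)+1) / p ^ (m+2+2))) + 1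
      = ((m:ℝ)+3)*((m:ℝ)+4)/p^2 - 3*(((m:ℝ)+3)/p) + 1 := by
    rw [smul_eq_mul]
    push_cast
    rw [show m+2+3 = (m+3)+2 from by omega, show m+2+2 = (m+3)+1 from by omega,
      pow_add, pow_succ]
    field_simp
    ring
  rw [e2] at hc
  have hc2 := hc.congr_fun (g := fun k => aa m p k * ((m:ℝ)+2+k)^2) fun k => by
    simp only [aa, smul_eq_mul]
    push_cast
    ring
  simpa using hc2
end


section
variable (m : ℕ) {p : ℝ}

lemma summable_AX2 (hp0 : 0 < p) (hp1 : p < 1) :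
    Summable (fun k => aa m p k * (((m:ℝ)+2)/((m:ℝ)+2+k))^2) := by
  have h1p : (0:ℝ) ≤ 1-p := by linarith
  refine Summable.of_nonneg_of_le (fun k => ?_) (fun k => ?_) (haa0 m hp0 hp1).summable
  · have : (0:ℝ) ≤ aa m p k := by unfold aa; positivity
    positivity
  · have h1 : (0:ℝ) ≤ aa m p k := by unfold aa; positivity
    have hk := Nat.cast_nonneg (α:=ℝ) k
    have hm := Nat.cast_nonneg (α:=ℝ) m
    have h2 : ((m:ℝ)+2)/((m:ℝ)+2+k) ≤ 1 := by
      rw [div_le_one (by linarith)]; linarith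
    have h3 : (0:ℝ) ≤ ((m:ℝ)+2)/((m:ℝ)+2+k) := by positivity
    have h4 : (((m:ℝ)+2)/((m:ℝ)+2+k))^2 ≤ 1 := by nlinarith
    calc aa m p k * (((m:ℝ)+2)/((m:ℝ)+2+k))^2 ≤ aa m p k * 1 :=
          mul_le_mul_of_nonneg_left h4 h1
      _ = aa m p k := by ring

lemma A_lb (hp0 : 0 < p) (hp1 : p < 1) :
    p^2 * ((m:ℝ)+1) <
      (∑' k:ℕ, aa m p k * (((m:ℝ)+2)/((m:ℝ)+2+k))^2) * (((m:ℝ)+1)+p) := by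
  have hm := Nat.cast_nonneg (α:=ℝ) m
  set X : ℕ → ℝ := fun k => ((m:ℝ)+2)/((m:ℝ)+2+k) with hX
  set A := ∑' k:ℕ, aa m p k * X k^2 with hA
  have hSA : HasSum (fun k => aa m p k * X k^2) A := (summable_AX2 m hp0 hp1).hasSum
  set c : ℝ := -p^2/((m:ℝ)+3) with hc
  set d : ℝ := p*(2*((m:ℝ)+3)-p)/((m:ℝ)+3) with hd
  have hcomb : HasSum (fun k => aa m p k * (X k - c*((m:ℝ)+2+k) - d)^2)
      (A - 2*d*p + c^2*(((m:ℝ)+3)*((m:ℝ)+4)/p^2 - 3*(((m:ℝ)+3)/p) + 1)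
        + 2*c*d*(((m:ℝ)+3)/p - 1) + (d^2 - 2*c*((m:ℝ)+2))) := by
    have h := (((hSA.sub ((haaX m hp0 hp1).mul_left (2*d))).add
        ((haaN2 m hp0 hp1).mul_left (c^2))).add
        ((haaN1 m hp0 hp1).mul_left (2*c*d))).add
        ((haa0 m hp0 hp1).mul_left (d^2 - 2*c*((m:ℝ)+2)))
    have e : A - 2*d*p + c^2*(((m:ℝ)+3)*((m:ℝ)+4)/p^2 - 3*(((m:ℝ)+3)/p) + 1)
        + 2*c*d*(((m:ℝ)+3)/p - 1) + (d^2 - 2*c*((m:ℝ)+2))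
        = A - 2*d*p + c^2*(((m:ℝ)+3)*((m:ℝ)+4)/p^2 - 3*(((m:ℝ)+3)/p) + 1)
        + 2*c*d*(((m:ℝ)+3)/p - 1) + (d^2 - 2*c*((m:ℝ)+2)) * 1 := by ring
    rw [e]
    refine h.congr_fun fun k => ?_
    have hk := Nat.cast_nonneg (α:=ℝ) k
    have hn : ((m:ℝ)+2+k) ≠ 0 := by positivity
    have hXn : X k * ((m:ℝ)+2+k) = (m:ℝ)+2 := by rw [hX]; field_simp
    have hXk : X k = ((m:ℝ)+2)/((m:ℝ)+2+k) := rfl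
    ring_nf
    linear_combination (norm := ring_nf) (-2*c*aa m p k) * hXn + (-2*d*aa m p k) * hXk
  have hnn : 0 ≤ A - 2*d*p + c^2*(((m:ℝ)+3)*((m:ℝ)+4)/p^2 - 3*(((m:ℝ)+3)/p) + 1)
        + 2*c*d*(((m:ℝ)+3)/p - 1) + (d^2 - 2*c*((m:ℝ)+2)) := by
    refine hcomb.nonneg fun k => ?_
    have h1p : (0:ℝ) ≤ 1-p := by linarith
    have h1 : (0:ℝ) ≤ aa m p k := by unfold aa; positivity
    positivity
  have h3 : (0:ℝ) < (m:ℝ)+3 := by linarith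
  have hBeq : 2*d*p - c^2*(((m:ℝ)+3)*((m:ℝ)+4)/p^2 - 3*(((m:ℝ)+3)/p) + 1)
      - 2*c*d*(((m:ℝ)+3)/p - 1) - (d^2 - 2*c*((m:ℝ)+2))
      = p^2*(((m:ℝ)+4)-p)/((m:ℝ)+3) := by
    rw [hc, hd]
    field_simp
    ring
  have hAB : p^2*(((m:ℝ)+4)-p)/((m:ℝ)+3) ≤ A := by linarith
  have hstep : p^2*((m:ℝ)+1) < p^2*(((m:ℝ)+4)-p)/((m:ℝ)+3) * (((m:ℝ)+1)+p) := by
    rw [div_mul_eq_mul_div, lt_div_iff₀ h3]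
    have h5 : (0:ℝ) < 3-p := by linarith
    nlinarith [mul_pos (mul_pos (mul_pos hp0 hp0) hp0) h5,
      mul_nonneg (mul_nonneg hp0.le hp0.le) hm]
  calc p^2 * ((m:ℝ)+1) < p^2*(((m:ℝ)+4)-p)/((m:ℝ)+3) * (((m:ℝ)+1)+p) := hstep
    _ ≤ A * (((m:ℝ)+1)+p) := by
        refine mul_le_mul_of_nonneg_right hAB (by linarith)
end

section
variable (m : ℕ) {p : ℝ}

lemma A_ub (hp0 : 0 < p) (hp1 : p < 1) :
    (∑' k:ℕ, aa m p k * (((m:ℝ)+2)/((m:ℝ)+2+k))^2) * ((((m:ℝ)+1)+p) * (((m:ℝ)+1)+2*p)) <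
      p^2 * (((m:ℝ)+2)^2-((m:ℝ)+2)+(2*((m:ℝ)+2)-1)*p+p^2) := by
  have hm := Nat.cast_nonneg (α:=ℝ) m
  set q : ℝ := 1 - p with hq
  have hq0 : 0 < q := by rw [hq]; linarith
  have hq1 : q < 1 := by rw [hq]; linarith
  -- pointwise identity
  have hpt : ∀ k : ℕ, q^(m+2) * (aa m p k * (((m:ℝ)+2)/((m:ℝ)+2+k))^2) =
      (((m:ℝ)+2) * p^(m+3)) * (((k + (m+1)).choose (m+1) : ℝ) * q^(m+2+k) / ((m:ℝ)+2+k)) := by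
    intro k
    have hk := Nat.cast_nonneg (α:=ℝ) k
    have hn : ((m:ℝ)+2+k) ≠ 0 := by positivity
    have hcc := chooseId (m+1) k
    push_cast at hcc
    unfold aa
    rw [pow_add q (m+2) k]
    field_simp
    rw [hq]
    linear_combination (norm := (push_cast; ring_nf))
      ((1-p)^k) * hcc
  have hsum : q^(m+2) * (∑' k:ℕ, aa m p k * (((m:ℝ)+2)/((m:ℝ)+2+k))^2) =
      (((m:ℝ)+2) * p^(m+3)) *
        ∑' k:ℕ, ((k + (m+1)).choose (m+1) : ℝ) * q^(m+2+k) / ((m:ℝ)+2+k) := by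
    rw [← tsum_mul_left, ← tsum_mul_left]
    exact tsum_congr hpt
  have hJle := tsum_le_J m hq0 hq1
  have hJlt := J_lt_M m hq0 hq1
  rw [show (1:ℝ) - q = p from by rw [hq]; ring] at hJlt
  set A := ∑' k:ℕ, aa m p k * (((m:ℝ)+2)/((m:ℝ)+2+k))^2 with hA
  set Mq := q^(m+2) * (((m:ℝ)+2)^2+((m:ℝ)+2)-(2*((m:ℝ)+2)+1)*q+q^2) /
        (((m:ℝ)+2) * (p^(m+1) * ((((m:ℝ)+2)-q) * (((m:ℝ)+2)+1-2*q)))) with hMq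
  have hqA : q^(m+2) * A < (((m:ℝ)+2) * p^(m+3)) * Mq := by
    rw [hsum]
    refine mul_lt_mul_of_pos_left (lt_of_le_of_lt hJle hJlt) (by positivity)
  -- key algebraic identity
  have hDpos : (0:ℝ) < (((m:ℝ)+1)+p) * (((m:ℝ)+1)+2*p) := by positivity
  have hkey : (((m:ℝ)+2) * p^(m+3)) * Mq * ((((m:ℝ)+1)+p) * (((m:ℝ)+1)+2*p)) =
      q^(m+2) * (p^2 * (((m:ℝ)+2)^2-((m:ℝ)+2)+(2*((m:ℝ)+2)-1)*p+p^2)) := by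
    rw [hMq, hq]
    have hne1 : ((m:ℝ)+2) - (1-p) ≠ 0 := by intro h; nlinarith
    have hne2 : ((m:ℝ)+2) + 1 - 2*(1-p) ≠ 0 := by intro h; nlinarith
    field_simp
    ring
  have hfin : q^(m+2) * (A * ((((m:ℝ)+1)+p) * (((m:ℝ)+1)+2*p))) <
      q^(m+2) * (p^2 * (((m:ℝ)+2)^2-((m:ℝ)+2)+(2*((m:ℝ)+2)-1)*p+p^2)) := by
    rw [← hkey, ← mul_assoc]
    exact mul_lt_mul_of_pos_right hqA hDpos
  exact lt_of_mul_lt_mul_left hfin (by positivity)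
end

section
variable (m : ℕ) {p : ℝ}

noncomputable def bb (p : ℝ) (k : ℕ) : ℝ := ((k + m).choose m : ℝ) * (1-p)^(m+1) * p^k

lemma hbbY (hp0 : 0 < p) (hp1 : p < 1) :
    HasSum (fun k => bb m p k * (((m:ℝ)+1+k)/((m:ℝ)+1))) (1/(1-p)) := by
  have hq : (0:ℝ) < 1 - p := by linarith
  have h := (nbGF1 m hp0.le hp1).mul_left ((1-p)^(m+1) / ((m:ℝ)+1))
  have e : (1-p)^(m+1) / ((m:ℝ)+1) * (((m:ℝ)+1) / (1-p)^(m+2)) = 1/(1-p) := by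
    have h2 : (1-p)^(m+2) = (1-p)^(m+1) * (1-p) := pow_succ _ _
    have : ((m:ℝ)+1) ≠ 0 := by positivity
    field_simp [h2]
    ring
  rw [e] at h
  refine h.congr_fun fun k => ?_
  unfold bb
  have : ((m:ℝ)+1) ≠ 0 := by positivity
  field_simp
  ring

lemma hbbN (hp0 : 0 < p) (hp1 : p < 1) :
    HasSum (fun k => bb m p k * ((m:ℝ)+1+k)) (((m:ℝ)+1)/(1-p)) := by
  have h := (hbbY m hp0 hp1).mul_left ((m:ℝ)+1)
  have e : ((m:ℝ)+1) * (1/(1-p)) = ((m:ℝ)+1)/(1-p) := by ring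
  rw [e] at h
  refine h.congr_fun fun k => ?_
  have : ((m:ℝ)+1) ≠ 0 := by positivity
  field_simp

lemma hbbY2 (hp0 : 0 < p) (hp1 : p < 1) :
    HasSum (fun k => bb m p k * (((m:ℝ)+1+k)/((m:ℝ)+1))^2)
      ((((m:ℝ)+1)+p)/(((m:ℝ)+1)*(1-p)^2)) := by
  have hq : (0:ℝ) < 1 - p := by linarith
  have hm1 : ((m:ℝ)+1) ≠ 0 := by positivity
  have h2 := (nbGF2 m hp0.le hp1).mul_left ((1-p)^(m+1) / ((m:ℝ)+1)^2)
  have h1 := (nbGF1 m hp0.le hp1).mul_left ((1-p)^(m+1) / ((m:ℝ)+1)^2)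
  have hc := h2.sub h1
  have e : (1-p)^(m+1) / ((m:ℝ)+1)^2 * (((m:ℝ)+1) * ((m:ℝ)+2) / (1-p)^(m+3)) -
      (1-p)^(m+1) / ((m:ℝ)+1)^2 * (((m:ℝ)+1) / (1-p)^(m+2)) =
      (((m:ℝ)+1)+p)/(((m:ℝ)+1)*(1-p)^2) := by
    rw [show m+3 = (m+1)+2 from by omega, show m+2 = (m+1)+1 from by omega, pow_add, pow_succ]
    field_simp
    ring
  rw [e] at hc
  refine hc.congr_fun fun k => ?_
  unfold bb
  field_simp
  ring

lemma haaN (hp0 : 0 < p) (hp1 : p < 1) :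
    HasSum (fun k => aa m p k * ((m:ℝ)+3+k)) (((m:ℝ)+3)/p) := by
  have h := (haaN1 m hp0 hp1).add (haa0 m hp0 hp1)
  have e : ((m:ℝ)+3)/p - 1 + 1 = ((m:ℝ)+3)/p := by ring
  rw [e] at h
  exact h.congr_fun fun k => by ring
end


set_option maxHeartbeats 1000000 in
theorem odds_estimator_efficiency (r : ℕ) (hr : 2 ≤ r) (p : ℝ) (hp0 : 0 < p) (hp1 : p < 1)
    (V S : ℝ)
    (hV : V = negbinExp2 (r + 1) p (r - 1) (1 - p) (fun n₁ n₂ => (ghat r n₁ n₂) ^ 2) -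
        (negbinExp2 (r + 1) p (r - 1) (1 - p) (ghat r)) ^ 2)
    (hS : S = negbinExp (r + 1) p (fun n => (n : ℝ)) +
        negbinExp (r - 1) (1 - p) (fun n => (n : ℝ))) :
    p / ((1 - p) ^ 3 * V * S) >
        (((r : ℝ) - 1) / ((r : ℝ) + 1 - 2 * p)) *
          (1 + p * (1 - p) / ((r : ℝ) - 1 + p + p ^ 2)) ∧
      (((r : ℝ) - 1) / ((r : ℝ) + 1 - 2 * p)) *
          (1 + p * (1 - p) / ((r : ℝ) - 1 + p + p ^ 2)) >
        ((r : ℝ) - 1) / ((r : ℝ) + 1) := by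
  obtain ⟨m, rfl⟩ : ∃ m, r = m + 2 := ⟨r - 2, by omega⟩
  have hm := Nat.cast_nonneg (α:=ℝ) m
  have hq : (0:ℝ) < 1 - p := by linarith
  have hm1 : (0:ℝ) < (m:ℝ)+1 := by linarith
  -- ghat values
  have hgh : ∀ k₁ k₂ : ℕ, ghat (m+2) (m+2+1+k₁) (m+2-1+k₂) =
      (((m:ℝ)+2)/((m:ℝ)+2+k₁)) * (((m:ℝ)+1+k₂)/((m:ℝ)+1)) := by
    intro k₁ k₂
    unfold ghat
    rw [show m+2-1 = m+1 from rfl]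
    push_cast
    ring
  -- expectations of N
  have hnb1 : negbinExp (m+2+1) p (fun n => (n:ℝ)) = ((m:ℝ)+3)/p := by
    rw [negbinExp, ← (haaN m hp0 hp1).tsum_eq]
    refine tsum_congr fun k => ?_
    unfold aa
    rw [show m+2+1+k-1 = k+(m+2) from by omega, show m+2+1-1 = m+2 from rfl]
    push_cast
    ring
  have hnb2 : negbinExp (m+2-1) (1-p) (fun n => (n:ℝ)) = ((m:ℝ)+1)/(1-p) := by
    rw [negbinExp, ← (hbbN m hp0 hp1).tsum_eq]
    refine tsum_congr fun k => ?_
    unfold bb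
    rw [show m+2-1 = m+1 from rfl, show m+1+k-1 = k+m from by omega,
      show m+1-1 = m from rfl, show (1:ℝ)-(1-p) = p from by ring]
    push_cast
    ring
  have hSe : S = ((m:ℝ)+3)/p + ((m:ℝ)+1)/(1-p) := by rw [hS, hnb1, hnb2]
  -- negbinExp2 for ghat
  have hE1 : negbinExp2 (m+2+1) p (m+2-1) (1-p) (ghat (m+2)) = p * (1/(1-p)) := by
    rw [negbinExp2]
    have inner : ∀ k₁ : ℕ,
        (∑' k₂ : ℕ, ((m+2+1+k₁-1).choose (m+2+1-1) : ℝ) * p^(m+2+1) * (1-p)^k₁ *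
          (((m+2-1+k₂-1).choose (m+2-1-1) : ℝ) * (1-p)^(m+2-1) * (1-(1-p))^k₂) *
          ghat (m+2) (m+2+1+k₁) (m+2-1+k₂)) =
        (aa m p k₁ * (((m:ℝ)+2)/((m:ℝ)+2+k₁))) * (1/(1-p)) := by
      intro k₁
      rw [← (hbbY m hp0 hp1).tsum_eq, ← tsum_mul_left]
      refine tsum_congr fun k₂ => ?_
      rw [hgh k₁ k₂]
      unfold aa bb
      rw [show m+2+1+k₁-1 = k₁+(m+2) from by omega, show m+2+1-1 = m+2 from rfl,
        show m+2-1 = m+1 from rfl, show m+1+k₂-1 = k₂+m from by omega,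
        show m+1-1 = m from rfl, show (1:ℝ)-(1-p) = p from by ring]
      push_cast
      ring
    rw [tsum_congr inner, tsum_mul_right, (haaX m hp0 hp1).tsum_eq]
  have hE2 : negbinExp2 (m+2+1) p (m+2-1) (1-p) (fun n₁ n₂ => (ghat (m+2) n₁ n₂)^2) =
      (∑' k:ℕ, aa m p k * (((m:ℝ)+2)/((m:ℝ)+2+k))^2) *
        ((((m:ℝ)+1)+p)/(((m:ℝ)+1)*(1-p)^2)) := by
    rw [negbinExp2]
    have inner : ∀ k₁ : ℕ,
        (∑' k₂ : ℕ, ((m+2+1+k₁-1).choose (m+2+1-1) : ℝ) * p^(m+2+1) * (1-p)^k₁ *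
          (((m+2-1+k₂-1).choose (m+2-1-1) : ℝ) * (1-p)^(m+2-1) * (1-(1-p))^k₂) *
          (ghat (m+2) (m+2+1+k₁) (m+2-1+k₂))^2) =
        (aa m p k₁ * (((m:ℝ)+2)/((m:ℝ)+2+k₁))^2) *
          ((((m:ℝ)+1)+p)/(((m:ℝ)+1)*(1-p)^2)) := by
      intro k₁
      rw [← (hbbY2 m hp0 hp1).tsum_eq, ← tsum_mul_left]
      refine tsum_congr fun k₂ => ?_
      rw [hgh k₁ k₂]
      unfold aa bb
      rw [show m+2+1+k₁-1 = k₁+(m+2) from by omega, show m+2+1-1 = m+2 from rfl,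
        show m+2-1 = m+1 from rfl, show m+1+k₂-1 = k₂+m from by omega,
        show m+1-1 = m from rfl, show (1:ℝ)-(1-p) = p from by ring]
      push_cast
      ring
    rw [tsum_congr inner, tsum_mul_right]
  -- bounds on A
  have hlb := A_lb m hp0 hp1
  have hub := A_ub m hp0 hp1
  set A := ∑' k:ℕ, aa m p k * (((m:ℝ)+2)/((m:ℝ)+2+(k:ℝ)))^2 with hA
  have hVeq : V = (A*(((m:ℝ)+1)+p) - p^2*((m:ℝ)+1))/(((m:ℝ)+1)*(1-p)^2) := by
    rw [hV, hE2, hE1]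
    field_simp
  have hVpos : 0 < V := by
    rw [hVeq]
    exact div_pos (by linarith) (by positivity)
  have hSpos : 0 < S := by
    rw [hSe]; exact add_pos (div_pos (by linarith) hp0) (div_pos hm1 hq)
  have hm3 : (0:ℝ) < (m:ℝ)+3-2*p := by linarith
  have hm1p : (0:ℝ) < (m:ℝ)+1+p+p^2 := by positivity
  have hVub : V < p^2*(((m:ℝ)+1)+p+p^2)/((1-p)^2*((m:ℝ)+1)*(((m:ℝ)+1)+2*p)) := by
    rw [hVeq, div_lt_div_iff₀ (by positivity) (by positivity)]
    nlinarith [mul_lt_mul_of_pos_left hub (mul_pos hm1 (pow_pos hq 2))]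
  constructor
  · -- main inequality
    push_cast
    have hW : 0 < (1-p)^3*V*S := mul_pos (mul_pos (pow_pos hq 3) hVpos) hSpos
    rw [gt_iff_lt, lt_div_iff₀ hW]
    have hB1pos : 0 < (((m:ℝ)+2)-1)/(((m:ℝ)+2)+1-2*p) * (1+p*(1-p)/(((m:ℝ)+2)-1+p+p^2)) := by
      have h1 : 0 < ((m:ℝ)+2)-1 := by linarith
      have h2 : 0 < ((m:ℝ)+2)+1-2*p := by linarith
      have h3 : 0 ≤ p*(1-p)/(((m:ℝ)+2)-1+p+p^2) := by positivity
      exact mul_pos (div_pos h1 h2) (by linarith)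
    have hcoef : 0 < (((m:ℝ)+2)-1)/(((m:ℝ)+2)+1-2*p) * (1+p*(1-p)/(((m:ℝ)+2)-1+p+p^2)) *
        ((1-p)^3*S) := mul_pos hB1pos (mul_pos (pow_pos hq 3) hSpos)
    have hfinal : (((m:ℝ)+2)-1)/(((m:ℝ)+2)+1-2*p) * (1+p*(1-p)/(((m:ℝ)+2)-1+p+p^2)) *
        ((1-p)^3*S) * (p^2*(((m:ℝ)+1)+p+p^2)/((1-p)^2*((m:ℝ)+1)*(((m:ℝ)+1)+2*p))) = p := by
      rw [hSe]
      have hne1 : ((m:ℝ)+2)-1+p+p^2 ≠ 0 := by intro h; nlinarith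
      have hne2 : ((m:ℝ)+2)+1-2*p ≠ 0 := by intro h; nlinarith
      field_simp
      ring
    calc (((m:ℝ)+2)-1)/(((m:ℝ)+2)+1-2*p) * (1+p*(1-p)/(((m:ℝ)+2)-1+p+p^2)) * ((1-p)^3*V*S)
        = (((m:ℝ)+2)-1)/(((m:ℝ)+2)+1-2*p) * (1+p*(1-p)/(((m:ℝ)+2)-1+p+p^2)) *
            ((1-p)^3*S) * V := by ring
      _ < (((m:ℝ)+2)-1)/(((m:ℝ)+2)+1-2*p) * (1+p*(1-p)/(((m:ℝ)+2)-1+p+p^2)) *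
            ((1-p)^3*S) * (p^2*(((m:ℝ)+1)+p+p^2)/((1-p)^2*((m:ℝ)+1)*(((m:ℝ)+1)+2*p))) :=
          mul_lt_mul_of_pos_left hVub hcoef
      _ = p := hfinal
  · -- second inequality
    push_cast
    rw [gt_iff_lt, ← sub_pos]
    have hdiff : (((m:ℝ)+2)-1)/(((m:ℝ)+2)+1-2*p) * (1+p*(1-p)/(((m:ℝ)+2)-1+p+p^2)) -
        (((m:ℝ)+2)-1)/(((m:ℝ)+2)+1) =
        (((m:ℝ)+1)*((((m:ℝ)+3)*(p*(1-p)) + 2*p*((m:ℝ)+1) + 2*p^2 + 2*p^3))) /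
          ((((m:ℝ)+3)-2*p)*((((m:ℝ)+1)+p+p^2)*(((m:ℝ)+3)))) := by
      have hne1 : ((m:ℝ)+2)-1+p+p^2 ≠ 0 := by intro h; nlinarith
      have hne2 : ((m:ℝ)+2)+1-2*p ≠ 0 := by intro h; nlinarith
      field_simp
      ring
    rw [hdiff]
    refine div_pos ?_ (by positivity)
    have h1 : 0 < ((m:ℝ)+3)*(p*(1-p)) := by positivity
    have h2 : 0 < 2*p*((m:ℝ)+1) := by positivity
    nlinarith
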